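/- Let G be a cubic simple graph with girth at least 5, let A be a MAI set of G, let B = V(G) \ A, let Y be the set of vertices of degree 1 in the induced subgraph G[A], and let Z be the set of vertices of degree 1 in G[B]. Then: (i) every vertex of Z has at most one neighbor in Y; and (ii) every vertex of Y has at most one neighbor in Z. -/

import Mathlib

/-- A set of vertices is independent if its vertices are pairwise nonadjacent. -/
def IsIndep {V : Type*} (G : SimpleGraph V) (s : Set V) : Prop :=
  s.Pairwise fun u v => ¬ G.Adj u v

/-- The independence number of a graph: the largest size of an independent set. -/
noncomputable def indepNum {V : Type*} (G : SimpleGraph V) : ℕ :=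
  sSup {n | ∃ s : Set V, IsIndep G s ∧ s.ncard = n}

/-- A graph is cubic (3-regular) if every vertex has exactly three neighbors. -/
def IsCubic {V : Type*} (G : SimpleGraph V) : Prop :=
  ∀ v : V, (G.neighborSet v).ncard = 3

/-- `A` is an AI set (almost independent set) if the subgraph induced by `A` has maximum
degree at most 1, i.e. every vertex of `A` has at most one neighbor inside `A`. -/
def IsAI {V : Type*} (G : SimpleGraph V) (A : Set V) : Prop :=
  ∀ a ∈ A, ({b | b ∈ A ∧ G.Adj a b}).ncard ≤ 1

/-- `A` is a MAI set (maximum almost independent set) if `A` is an AI set containing an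
independent set of maximum size `α(G)`, and `A` is largest among such sets. -/
def IsMAI {V : Type*} (G : SimpleGraph V) (A : Set V) : Prop :=
  IsAI G A ∧ (∃ s ⊆ A, IsIndep G s ∧ s.ncard = indepNum G) ∧
    ∀ A' : Set V, IsAI G A' → (∃ s ⊆ A', IsIndep G s ∧ s.ncard = indepNum G) →
      A'.ncard ≤ A.ncard

namespace YZhelpers

open SimpleGraph

lemma no_triangle {V : Type*} {G : SimpleGraph V} (hg : 5 ≤ G.egirth)
    {a b c : V} (hab : G.Adj a b) (hbc : G.Adj b c) (hca : G.Adj c a) : False := by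
  have hcyc : (Walk.cons hab (Walk.cons hbc (Walk.cons hca Walk.nil)) : G.Walk a a).IsCycle := by
    simp [Walk.isCycle_def, Walk.isTrail_def, hab.ne, hbc.ne, hca.ne, hab.ne', hbc.ne', hca.ne']
  have := SimpleGraph.le_egirth.mp hg a _ hcyc
  norm_num at this

lemma no_square {V : Type*} {G : SimpleGraph V} (hg : 5 ≤ G.egirth)
    {a b c d : V} (hab : G.Adj a b) (hbc : G.Adj b c) (hcd : G.Adj c d) (hda : G.Adj d a)
    (hac : a ≠ c) (hbd : b ≠ d) : False := by
  have hcyc : (Walk.cons hab (Walk.cons hbc (Walk.cons hcd (Walk.cons hda Walk.nil))) :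
      G.Walk a a).IsCycle := by
    simp [Walk.isCycle_def, Walk.isTrail_def, hab.ne, hbc.ne, hcd.ne, hda.ne,
      hab.ne', hbc.ne', hcd.ne', hda.ne', hac, hbd, hac.symm, hbd.symm]
  have := SimpleGraph.le_egirth.mp hg a _ hcyc
  norm_num at this

variable {V : Type*} [Fintype V] {G : SimpleGraph V}

lemma eq_of_ncard_le_one {s : Set V} (h : s.ncard ≤ 1) {x y : V}
    (hx : x ∈ s) (hy : y ∈ s) : x = y :=
  (Set.ncard_le_one (Set.toFinite s)).mp h x hx y hy

lemma indep_le (s : Set V) (h : IsIndep G s) : s.ncard ≤ _root_.indepNum G := by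
  apply le_csSup
  · refine ⟨Fintype.card V, ?_⟩
    rintro n ⟨t, -, rfl⟩
    have := Set.ncard_le_ncard (Set.subset_univ t) Set.finite_univ
    simpa [Set.ncard_univ, Nat.card_eq_fintype_card] using this
  · exact ⟨s, h, rfl⟩

omit [Fintype V] in
lemma indep_insert {S : Set V} (hind : IsIndep G S) {z : V} (h : ∀ u ∈ S, ¬ G.Adj z u) :
    IsIndep G (insert z S) := by
  refine (haveI : Std.Symm (fun u v : V => ¬ G.Adj u v) := ⟨?_⟩; Set.pairwise_insert_of_symm (r := fun u v : V => ¬ G.Adj u v)).mpr ⟨hind, fun b hb _ => h b hb⟩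
  intro u v h' hadj
  exact h' hadj.symm

lemma nbr_split (hcubic : IsCubic G) (A : Set V) (v : V) :
    ({b | b ∈ A ∧ G.Adj v b}).ncard + ({b | b ∈ Aᶜ ∧ G.Adj v b}).ncard = 3 := by
  have hdisj : Disjoint {b | b ∈ A ∧ G.Adj v b} {b | b ∈ Aᶜ ∧ G.Adj v b} := by
    rw [Set.disjoint_left]
    rintro b ⟨hbA, -⟩ ⟨hbB, -⟩
    exact hbB hbA
  have hunion : {b | b ∈ A ∧ G.Adj v b} ∪ {b | b ∈ Aᶜ ∧ G.Adj v b} = G.neighborSet v := by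
    ext b
    simp only [Set.mem_union, Set.mem_setOf_eq, SimpleGraph.mem_neighborSet, Set.mem_compl_iff]
    tauto
  rw [← Set.ncard_union_eq hdisj (Set.toFinite _) (Set.toFinite _), hunion, hcubic v]

lemma swap_out {A : Set V} (hAI : IsAI G A) {S : Set V} (hSA : S ⊆ A)
    (hind : IsIndep G S) {y : V} (hyA : y ∈ A)
    {a : V} (haA : a ∈ A) (hadj : G.Adj y a) :
    ∃ S', S' ⊆ A ∧ IsIndep G S' ∧ S'.ncard = S.ncard ∧ y ∉ S' ∧ S' ⊆ S ∪ {a} := by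
  have hy_mem : y ∈ {b | b ∈ A ∧ G.Adj a b} := ⟨hyA, hadj.symm⟩
  have key : ∀ u ∈ A, G.Adj a u → u = y := fun u hu hadj' =>
    eq_of_ncard_le_one (hAI a haA) ⟨hu, hadj'⟩ hy_mem
  by_cases hyS : y ∈ S
  · refine ⟨insert a (S \ {y}), ?_, ?_, ?_, ?_, ?_⟩
    · rintro u (rfl | hu)
      · exact haA
      · exact hSA hu.1
    · refine (haveI : Std.Symm (fun u v : V => ¬ G.Adj u v) := ⟨?_⟩; Set.pairwise_insert_of_symm (r := fun u v : V => ¬ G.Adj u v)).mpr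
        ⟨hind.mono Set.diff_subset, fun b hb _ hadj' => hb.2 (key b (hSA hb.1) hadj')⟩
      intro u v h' hadj'
      exact h' hadj'.symm
    · have hanotin : a ∉ S \ {y} := by
        rintro ⟨haS, -⟩
        exact hind hyS haS hadj.ne hadj
      rw [Set.ncard_insert_of_notMem hanotin (Set.toFinite _)]
      exact Set.ncard_diff_singleton_add_one hyS (Set.toFinite _)
    · rintro (rfl | hu)
      · exact hadj.ne rfl
      · exact hu.2 rfl
    · rintro u (rfl | hu)
      · exact Or.inr rfl
      · exact Or.inl hu.1
  · exact ⟨S, hSA, hind, rfl, hyS, Set.subset_union_left⟩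

end YZhelpers

open YZhelpers

theorem YZ_matching {V : Type*} [Fintype V] (G : SimpleGraph V)
    (hcubic : IsCubic G) (hgirth : 5 ≤ G.egirth)
    (A : Set V) (hA : IsMAI G A) (Y Z : Set V)
    (hY : Y = {a ∈ A | ({b | b ∈ A ∧ G.Adj a b}).ncard = 1})
    (hZ : Z = {a ∈ Aᶜ | ({b | b ∈ Aᶜ ∧ G.Adj a b}).ncard = 1}) :
    (∀ z ∈ Z, ({y | y ∈ Y ∧ G.Adj z y}).ncard ≤ 1) ∧
      (∀ y ∈ Y, ({z | z ∈ Z ∧ G.Adj y z}).ncard ≤ 1) := by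
  subst hY hZ
  obtain ⟨hAI, ⟨S, hSA, hSind, hScard⟩, hmax⟩ := hA
  -- unique neighbour description for Y-vertices
  have getY : ∀ y ∈ A, ({b | b ∈ A ∧ G.Adj y b}).ncard = 1 →
      ∃ a, a ∈ A ∧ G.Adj y a ∧ ∀ u ∈ A, G.Adj y u → u = a := by
    intro y hyA hy1
    obtain ⟨a, haset⟩ := Set.ncard_eq_one.mp hy1
    have hamem : a ∈ {b | b ∈ A ∧ G.Adj y b} := by rw [haset]; exact rfl
    refine ⟨a, hamem.1, hamem.2, fun u huA hadj => ?_⟩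
    have : u ∈ {b | b ∈ A ∧ G.Adj y b} := ⟨huA, hadj⟩
    rw [haset] at this
    exact this
  -- core claim: no vertex of Z has two distinct neighbours in Y
  have core1 : ∀ z, z ∈ Aᶜ → ({b | b ∈ Aᶜ ∧ G.Adj z b}).ncard = 1 →
      ∀ y1 y2, y1 ∈ A → ({b | b ∈ A ∧ G.Adj y1 b}).ncard = 1 →
        y2 ∈ A → ({b | b ∈ A ∧ G.Adj y2 b}).ncard = 1 →
        G.Adj z y1 → G.Adj z y2 → y1 ≠ y2 → False := by
    intro z hzB hz1 y1 y2 hy1A hy1c hy2A hy2c hzy1 hzy2 hne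
    have hzA2 : ({b | b ∈ A ∧ G.Adj z b}).ncard = 2 := by
      have := nbr_split hcubic A z
      omega
    have hpair : ({y1, y2} : Set V) = {b | b ∈ A ∧ G.Adj z b} := by
      apply Set.eq_of_subset_of_ncard_le
      · rintro u (rfl | rfl)
        · exact ⟨hy1A, hzy1⟩
        · exact ⟨hy2A, hzy2⟩
      · rw [hzA2, Set.ncard_pair hne]
      · exact Set.toFinite _
    have hzmem : ∀ u ∈ A, G.Adj z u → u = y1 ∨ u = y2 := by
      intro u huA hadj
      have : u ∈ ({y1, y2} : Set V) := by rw [hpair]; exact ⟨huA, hadj⟩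
      exact this
    obtain ⟨a1, ha1A, hy1a1, huniq1⟩ := getY y1 hy1A hy1c
    obtain ⟨a2, ha2A, hy2a2, huniq2⟩ := getY y2 hy2A hy2c
    -- a1 ≠ y2, a2 ≠ y1 (else triangle z y1 y2)
    have hy1y2 : ¬ G.Adj y1 y2 := fun h => no_triangle hgirth hzy1 h hzy2.symm
    have ha1y2 : a1 ≠ y2 := fun h => hy1y2 (h ▸ hy1a1)
    have ha2y1 : a2 ≠ y1 := fun h => hy1y2 ((h ▸ hy2a2).symm)
    -- a1 ≠ a2 (else 4-cycle z y1 a1 y2)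
    have ha1a2 : a1 ≠ a2 := by
      rintro rfl
      have hzA : z ∈ Aᶜ := hzB
      exact no_square hgirth hzy1 hy1a1 hy2a2.symm hzy2.symm (fun h => hzA (h ▸ ha1A)) hne
    -- swap y1 out of S
    obtain ⟨S1, hS1A, hS1ind, hS1card, hy1S1, hS1sub⟩ :=
      swap_out hAI hSA hSind hy1A ha1A hy1a1
    obtain ⟨S2, hS2A, hS2ind, hS2card, hy2S2, hS2sub⟩ :=
      swap_out hAI hS1A hS1ind hy2A ha2A hy2a2
    have hy1S2 : y1 ∉ S2 := by
      intro h
      rcases hS2sub h with h' | h'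
      · exact hy1S1 h'
      · exact ha2y1 h'.symm
    have hzS2 : z ∉ S2 := fun h => hzB (hS2A h)
    have hindz : IsIndep G (insert z S2) := by
      apply indep_insert hS2ind
      intro u huS2 hadj
      rcases hzmem u (hS2A huS2) hadj with rfl | rfl
      · exact hy1S2 huS2
      · exact hy2S2 huS2
    have hcard : (insert z S2).ncard = indepNum G + 1 := by
      rw [Set.ncard_insert_of_notMem hzS2 (Set.toFinite _), hS2card, hS1card, hScard]
    have := indep_le _ hindz
    rw [hcard] at this
    omega
  constructor
  · -- part (i)
    rintro z ⟨hzB, hz1⟩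
    apply (Set.ncard_le_one (Set.toFinite _)).mpr
    rintro y1 ⟨⟨hy1A, hy1c⟩, hzy1⟩ y2 ⟨⟨hy2A, hy2c⟩, hzy2⟩
    by_contra hne
    exact core1 z hzB hz1 y1 y2 hy1A hy1c hy2A hy2c hzy1 hzy2 hne
  · -- part (ii)
    rintro y ⟨hyA, hy1⟩
    apply (Set.ncard_le_one (Set.toFinite _)).mpr
    rintro z1 ⟨⟨hz1B, hz1c⟩, hyz1⟩ z2 ⟨⟨hz2B, hz2c⟩, hyz2⟩
    by_contra hne
    obtain ⟨a, haA, hya, huniqa⟩ := getY y hyA hy1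
    -- description of A-neighbourhoods of z₁, z₂
    have getc : ∀ z', z' ∈ Aᶜ → ({b | b ∈ Aᶜ ∧ G.Adj z' b}).ncard = 1 → G.Adj y z' →
        ∃ c, c ∈ A ∧ G.Adj z' c ∧ c ≠ y ∧ ∀ u ∈ A, G.Adj z' u → u = y ∨ u = c := by
      intro z' hz'B hz'1 hyz'
      have hzA2 : ({b | b ∈ A ∧ G.Adj z' b}).ncard = 2 := by
        have := nbr_split hcubic A z'
        omega
      obtain ⟨u, v, huv, hset⟩ := Set.ncard_eq_two.mp hzA2
      have hymem : y ∈ {b | b ∈ A ∧ G.Adj z' b} := ⟨hyA, hyz'.symm⟩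
      rw [hset] at hymem
      have hmem : ∀ w, w ∈ ({u, v} : Set V) → w ∈ A ∧ G.Adj z' w := by
        intro w hw
        rw [← hset] at hw
        exact hw
      have huniv : ∀ w ∈ A, G.Adj z' w → w ∈ ({u, v} : Set V) := by
        intro w hwA hadj
        rw [← hset]
        exact ⟨hwA, hadj⟩
      rcases hymem with rfl | rfl
      · obtain ⟨hvA, hvadj⟩ := hmem v (Or.inr rfl)
        exact ⟨v, hvA, hvadj, fun h => huv h.symm, fun w hwA hadj => huniv w hwA hadj⟩
      · obtain ⟨huA, huadj⟩ := hmem u (Or.inl rfl)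
        refine ⟨u, huA, huadj, fun h => huv h, fun w hwA hadj => (huniv w hwA hadj).symm⟩
    obtain ⟨c1, hc1A, hz1c1, hc1y, huniv1⟩ := getc z1 hz1B hz1c hyz1
    obtain ⟨c2, hc2A, hz2c2, hc2y, huniv2⟩ := getc z2 hz2B hz2c hyz2
    -- c₁, c₂ are not in Y, hence have no neighbours in A
    have hc1X : ∀ u ∈ A, ¬ G.Adj c1 u := by
      have hnot : ({b | b ∈ A ∧ G.Adj c1 b}).ncard ≠ 1 := by
        intro h1
        exact core1 z1 hz1B hz1c y c1 hyA hy1 hc1A h1 hyz1.symm hz1c1 (Ne.symm hc1y)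
      have hle := hAI c1 hc1A
      have h0 : ({b | b ∈ A ∧ G.Adj c1 b}).ncard = 0 := by omega
      have hempty : ({b | b ∈ A ∧ G.Adj c1 b}) = ∅ :=
        (Set.ncard_eq_zero (Set.toFinite _)).mp h0
      intro u huA hadj
      have : u ∈ ({b | b ∈ A ∧ G.Adj c1 b} : Set V) := ⟨huA, hadj⟩
      rw [hempty] at this
      exact this
    have hc2X : ∀ u ∈ A, ¬ G.Adj c2 u := by
      have hnot : ({b | b ∈ A ∧ G.Adj c2 b}).ncard ≠ 1 := by
        intro h1
        exact core1 z2 hz2B hz2c y c2 hyA hy1 hc2A h1 hyz2.symm hz2c2 (Ne.symm hc2y)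
      have hle := hAI c2 hc2A
      have h0 : ({b | b ∈ A ∧ G.Adj c2 b}).ncard = 0 := by omega
      have hempty : ({b | b ∈ A ∧ G.Adj c2 b}) = ∅ :=
        (Set.ncard_eq_zero (Set.toFinite _)).mp h0
      intro u huA hadj
      have : u ∈ ({b | b ∈ A ∧ G.Adj c2 b} : Set V) := ⟨huA, hadj⟩
      rw [hempty] at this
      exact this
    -- girth facts
    have hz1z2 : ¬ G.Adj z1 z2 := fun h => no_triangle hgirth hyz1 h hyz2.symm
    have hc1c2 : c1 ≠ c2 := by
      rintro rfl
      exact no_square hgirth hyz1 hz1c1 hz2c2.symm hyz2.symm (Ne.symm hc1y) hne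
    have hz2c1 : ¬ G.Adj z2 c1 := by
      intro h
      rcases huniv2 c1 hc1A h with h' | h'
      · exact hc1y h'
      · exact hc1c2 h'
    have hz1c2 : ¬ G.Adj z1 c2 := by
      intro h
      rcases huniv1 c2 hc2A h with h' | h'
      · exact hc2y h'
      · exact hc1c2 h'.symm
    -- the enlarged AI set
    set A' : Set V := insert z1 (insert z2 (A \ {y})) with hA'def
    have hmemA' : ∀ u, u ∈ A' ↔ u = z1 ∨ u = z2 ∨ (u ∈ A ∧ u ≠ y) := by
      intro u
      simp [hA'def, Set.mem_insert_iff, Set.mem_diff]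
    have hAI' : IsAI G A' := by
      intro v hvA'
      apply (Set.ncard_le_one (Set.toFinite _)).mpr
      rintro b1 ⟨hb1A', hvb1⟩ b2 ⟨hb2A', hvb2⟩
      -- auxiliary: classify a neighbour of v inside A'
      rcases (hmemA' v).mp hvA' with rfl | rfl | ⟨hvA, hvy⟩
      · -- v = z1 : any A'-neighbour equals c1
        have hb : ∀ b, b ∈ A' → G.Adj v b → b = c1 := by
          intro b hbA' hadj
          rcases (hmemA' b).mp hbA' with rfl | rfl | ⟨hbA, hby⟩
          · exact absurd hadj (G.loopless.irrefl b).elim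
          · exact absurd hadj hz1z2
          · rcases huniv1 b hbA hadj with h' | h'
            · exact absurd h' hby
            · exact h'
        rw [hb b1 hb1A' hvb1, hb b2 hb2A' hvb2]
      · have hb : ∀ b, b ∈ A' → G.Adj v b → b = c2 := by
          intro b hbA' hadj
          rcases (hmemA' b).mp hbA' with rfl | rfl | ⟨hbA, hby⟩
          · exact absurd hadj (fun h => hz1z2 h.symm)
          · exact absurd hadj (G.loopless.irrefl b).elim
          · rcases huniv2 b hbA hadj with h' | h'
            · exact absurd h' hby
            · exact h'
        rw [hb b1 hb1A' hvb1, hb b2 hb2A' hvb2]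
      · -- v ∈ A \ {y}
        have hclass : ∀ b, b ∈ A' → G.Adj v b → (b = z1 ∧ v = c1) ∨ (b = z2 ∧ v = c2) ∨
            (b ∈ A ∧ b ≠ y) := by
          intro b hbA' hadj
          rcases (hmemA' b).mp hbA' with rfl | rfl | ⟨hbA, hby⟩
          · left
            refine ⟨rfl, ?_⟩
            rcases huniv1 v hvA hadj.symm with h' | h'
            · exact absurd h' hvy
            · exact h'
          · right; left
            refine ⟨rfl, ?_⟩
            rcases huniv2 v hvA hadj.symm with h' | h'
            · exact absurd h' hvy
            · exact h'
          · right; right; exact ⟨hbA, hby⟩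
        rcases hclass b1 hb1A' hvb1 with ⟨rfl, rfl⟩ | ⟨rfl, rfl⟩ | ⟨hb1A, hb1y⟩
        · rcases hclass b2 hb2A' hvb2 with ⟨rfl, h2⟩ | ⟨h2, h2'⟩ | ⟨hb2A, hb2y⟩
          · rfl
          · exact absurd h2' hc1c2
          · exact absurd hvb2 (fun h => hc1X b2 hb2A h)
        · rcases hclass b2 hb2A' hvb2 with ⟨h2, h2'⟩ | ⟨rfl, h2⟩ | ⟨hb2A, hb2y⟩
          · exact absurd h2' (Ne.symm hc1c2)
          · rfl
          · exact absurd hvb2 (fun h => hc2X b2 hb2A h)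
        · rcases hclass b2 hb2A' hvb2 with ⟨rfl, rfl⟩ | ⟨rfl, rfl⟩ | ⟨hb2A, hb2y⟩
          · exact absurd hvb1 (fun h => hc1X b1 hb1A h)
          · exact absurd hvb1 (fun h => hc2X b1 hb1A h)
          · exact eq_of_ncard_le_one (hAI v hvA) ⟨hb1A, hvb1⟩ ⟨hb2A, hvb2⟩
    -- A' contains a maximum independent set
    obtain ⟨S', hS'A, hS'ind, hS'card, hyS', _⟩ := swap_out hAI hSA hSind hyA haA hya
    have hS'A' : S' ⊆ A' := by
      intro u huS'
      exact (hmemA' u).mpr (Or.inr (Or.inr ⟨hS'A huS', fun h => hyS' (h ▸ huS')⟩))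
    have hM2' : ∃ s ⊆ A', IsIndep G s ∧ s.ncard = indepNum G := by
      exact ⟨S', hS'A', hS'ind, by rw [hS'card, hScard]⟩
    -- cardinality computation
    have hz1B' : z1 ∉ insert z2 (A \ {y}) := by
      rintro (rfl | h)
      · exact hne rfl
      · exact hz1B h.1
    have hz2B' : z2 ∉ A \ {y} := fun h => hz2B h.1
    have hcardA' : A'.ncard = A.ncard + 1 := by
      rw [hA'def, Set.ncard_insert_of_notMem hz1B' (Set.toFinite _),
        Set.ncard_insert_of_notMem hz2B' (Set.toFinite _)]
      have := Set.ncard_diff_singleton_add_one hyA (Set.toFinite A)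
      omega
    have := hmax A' hAI' hM2'
    omega
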